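/- arXiv:math/0306026 — 5 statements merged into one kernel-verified Lean document; each statement's English description precedes it below -/
import Mathlib

section
/- Let L be an orthomodular lattice and p : L × L → [0,1] an s-map (i.e. p(1,1)=1; p(a,b)=0 whenever a ⟂ b; and p is additive in each argument over orthogonal joins). If a and b are compatible elements of L, then p(a,b) = p(a∧b, a∧b) = p(b,a). -/
/-- An orthomodular lattice: a bounded lattice with an orthocomplementation
satisfying `aᶜᶜ = a`, `a ⊔ aᶜ = ⊤`, antitonicity, and the orthomodular law. -/
class OML (L : Type*) extends Lattice L, BoundedOrder L, Compl L where
  compl_compl : ∀ a : L, aᶜᶜ = a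
  sup_compl : ∀ a : L, a ⊔ aᶜ = ⊤
  compl_antitone : ∀ a b : L, a ≤ b → bᶜ ≤ aᶜ
  orthomodular : ∀ a b : L, a ≤ b → b = a ⊔ (aᶜ ⊓ b)

/-- Orthogonality: `a ⟂ b` iff `a ≤ bᶜ`. -/
def Orth {L : Type*} [OML L] (a b : L) : Prop := a ≤ bᶜ

/-- An s-map on an OML `L`: `p : L × L → [0,1]` with `p(1,1)=1`,
`p(a,b)=0` for orthogonal `a,b`, and additivity in each coordinate
over orthogonal joins. -/
structure SMap (L : Type*) [OML L] where
  p : L → L → ℝ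
  nonneg : ∀ a b, 0 ≤ p a b
  le_one : ∀ a b, p a b ≤ 1
  top_top : p ⊤ ⊤ = 1
  orth_zero : ∀ a b, Orth a b → p a b = 0
  add_left : ∀ a b c, Orth a b → p (a ⊔ b) c = p a c + p b c
  add_right : ∀ a b c, Orth a b → p c (a ⊔ b) = p c a + p c b

/-- Compatibility of two elements in an OML. -/
def Compat {L : Type*} [OML L] (a b : L) : Prop :=
  ∃ a₁ b₁ c : L, Orth a₁ b₁ ∧ Orth a₁ c ∧ Orth b₁ c ∧ a = a₁ ⊔ c ∧ b = b₁ ⊔ c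


section Aux
variable {L : Type*} [OML L]

lemma orth_symm' {a b : L} (h : Orth a b) : Orth b a := by
  have := OML.compl_antitone a (bᶜ) h
  rwa [OML.compl_compl] at this

lemma deMorgan' (a b : L) : (a ⊔ b)ᶜ = aᶜ ⊓ bᶜ := by
  apply le_antisymm
  · exact le_inf (OML.compl_antitone _ _ le_sup_left)
      (OML.compl_antitone _ _ le_sup_right)
  · have ha : a ≤ (aᶜ ⊓ bᶜ)ᶜ := by
      have := OML.compl_antitone (aᶜ ⊓ bᶜ) (aᶜ) inf_le_left
      rwa [OML.compl_compl] at this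
    have hb : b ≤ (aᶜ ⊓ bᶜ)ᶜ := by
      have := OML.compl_antitone (aᶜ ⊓ bᶜ) (bᶜ) inf_le_right
      rwa [OML.compl_compl] at this
    have := OML.compl_antitone (a ⊔ b) ((aᶜ ⊓ bᶜ)ᶜ) (sup_le ha hb)
    rwa [OML.compl_compl] at this

lemma compl_top' : (⊤ : L)ᶜ = ⊥ := by
  have h := OML.compl_antitone ((⊥ : L)ᶜ) ⊤ le_top
  rw [OML.compl_compl] at h
  exact le_bot_iff.mp h

lemma inf_compl_self' (a : L) : a ⊓ aᶜ = ⊥ := by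
  have h := congrArg (·ᶜ) (OML.sup_compl a)
  simp only [deMorgan', OML.compl_compl, compl_top'] at h
  rwa [inf_comm] at h

lemma compl_inf_sup' {c d : L} (h : Orth d c) : dᶜ ⊓ (d ⊔ c) = c := by
  have hcd : c ≤ dᶜ := orth_symm' h
  have hcx : c ≤ dᶜ ⊓ (d ⊔ c) := le_inf hcd le_sup_right
  have hx := OML.orthomodular c (dᶜ ⊓ (d ⊔ c)) hcx
  have hzero : cᶜ ⊓ (dᶜ ⊓ (d ⊔ c)) = ⊥ := by
    rw [← inf_assoc, inf_comm (cᶜ) (dᶜ), ← deMorgan', inf_comm, inf_compl_self']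
  rw [hzero, sup_bot_eq] at hx
  exact hx
end Aux


theorem smap_compatible {L : Type*} [OML L] (P : SMap L) (a b : L)
    (hab : Compat a b) :
    P.p a b = P.p (a ⊓ b) (a ⊓ b) ∧ P.p a b = P.p b a := by
  obtain ⟨a₁, b₁, c, h1, h2, h3, ha, hb⟩ := hab
  have hmeet : a ⊓ b = c := by
    apply le_antisymm
    · have hab1 : a ≤ b₁ᶜ := by
        rw [ha]; exact sup_le h1 (orth_symm' h3)
      have : a ⊓ b ≤ b₁ᶜ ⊓ (b₁ ⊔ c) := by
        rw [← hb]; exact inf_le_inf hab1 le_rfl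
      rwa [compl_inf_sup' h3] at this
    · exact le_inf (ha ▸ le_sup_right) (hb ▸ le_sup_right)
  have e1 : P.p a b = P.p c c := by
    rw [ha, hb, P.add_left _ _ _ h2, P.add_right _ _ _ h3, P.add_right _ _ _ h3,
      P.orth_zero _ _ h1, P.orth_zero _ _ h2, P.orth_zero _ _ (orth_symm' h3)]
    ring
  have e2 : P.p b a = P.p c c := by
    rw [ha, hb, P.add_left _ _ _ h3, P.add_right _ _ _ h2, P.add_right _ _ _ h2,
      P.orth_zero _ _ (orth_symm' h1), P.orth_zero _ _ h3, P.orth_zero _ _ (orth_symm' h2)]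
    ring
  rw [hmeet]
  exact ⟨e1, e1.trans e2.symm⟩
end

section
/- Let L be an orthomodular lattice and p an s-map on L. Then the diagonal map ν(b) := p(b,b) is a state on L, i.e. ν(0)=0, ν(1)=1, and ν(a∨b)=ν(a)+ν(b) whenever a ⟂ b. -/
theorem smap_diag_is_state {L : Type*} [OML L] (P : SMap L) :
    P.p ⊥ ⊥ = 0 ∧ P.p ⊤ ⊤ = 1 ∧
      ∀ a b : L, Orth a b → P.p (a ⊔ b) (a ⊔ b) = P.p a a + P.p b b := by
  refine ⟨P.orth_zero ⊥ ⊥ bot_le, P.top_top, ?_⟩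
  intro a b h
  have hba : Orth b a := by
    have := OML.compl_antitone a bᶜ h
    rwa [OML.compl_compl] at this
  rw [P.add_left a b _ h, P.add_right a b a h, P.add_right a b b h,
    P.orth_zero a b h, P.orth_zero b a hba]
  ring
end

section
/- Let L be an orthomodular lattice and p an s-map on L. Define L_c = {b ∈ L : p(b,b) ≠ 0} and f_p(a,b) = p(a,b)/p(b,b) for b ∈ L_c. Then for each fixed b ∈ L_c, the map f_p(·,b) is a state on L: f_p(0,b)=0, f_p(1,b)=1, f_p(b,b)=1, and f_p(a∨c,b)=f_p(a,b)+f_p(c,b) whenever a ⟂ c. -/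
theorem smap_conditional_is_state {L : Type*} [OML L] (P : SMap L) (b : L)
    (hb : P.p b b ≠ 0) :
    P.p ⊥ b / P.p b b = 0 ∧ P.p ⊤ b / P.p b b = 1 ∧ P.p b b / P.p b b = 1 ∧
      ∀ a c : L, Orth a c →
        P.p (a ⊔ c) b / P.p b b = P.p a b / P.p b b + P.p c b / P.p b b := by
  have hbot : P.p ⊥ b = 0 := P.orth_zero _ _ (bot_le)
  have hcb : P.p bᶜ b = 0 := P.orth_zero _ _ (le_refl _)
  have htop : P.p ⊤ b = P.p b b := by
    have h1 : (⊤ : L) = b ⊔ bᶜ := (OML.sup_compl b).symm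
    have h2 : Orth b bᶜ := by
      unfold Orth; rw [OML.compl_compl]
    rw [h1, P.add_left _ _ _ h2, hcb, add_zero]
  refine ⟨by rw [hbot]; simp, by rw [htop]; exact div_self hb, div_self hb, ?_⟩
  intro a c h
  rw [P.add_left _ _ _ h, add_div]
end

section
/- Let L be an orthomodular lattice, p an s-map on L, and f_p(a,b)=p(a,b)/p(b,b) for b with p(b,b)≠0. If b₁,…,bₙ ∈ L are mutually orthogonal with p(bᵢ,bᵢ)≠0 for each i and p(⋁ᵢbᵢ,⋁ᵢbᵢ)≠0, then for every a ∈ L: f_p(a, ⋁ᵢbᵢ) = Σᵢ f_p(bᵢ, ⋁ᵢbᵢ) · f_p(a, bᵢ). -/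
lemma orth_of_le_compl {L : Type*} [OML L] {a b : L} (h : b ≤ aᶜ) : Orth a b := by
  have := OML.compl_antitone b (aᶜ) h
  rw [OML.compl_compl] at this
  exact this

/-- If `b ≤ c` then `p b c = p b b`. -/
lemma SMap.p_of_le {L : Type*} [OML L] (P : SMap L) {b c : L} (h : b ≤ c) :
    P.p b c = P.p b b := by
  have hdecomp := OML.orthomodular b c h
  have horth : Orth b (bᶜ ⊓ c) := orth_of_le_compl inf_le_left
  calc P.p b c = P.p b (b ⊔ (bᶜ ⊓ c)) := by rw [← hdecomp]
    _ = P.p b b + P.p b (bᶜ ⊓ c) := P.add_right _ _ _ horth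
    _ = P.p b b := by rw [P.orth_zero _ _ horth, add_zero]

lemma OML_compl_bot {L : Type*} [OML L] : (⊥ : L)ᶜ = ⊤ := by
  have := OML.sup_compl (⊥ : L)
  simpa using this

lemma SMap.p_bot_right {L : Type*} [OML L] (P : SMap L) (a : L) : P.p a ⊥ = 0 :=
  P.orth_zero a ⊥ (by simp [Orth, OML_compl_bot])

lemma SMap.p_sup_right {L : Type*} [OML L] (P : SMap L) (n : ℕ) (b : Fin n → L)
    (horth : ∀ i j, i ≠ j → Orth (b i) (b j)) (a : L) (s : Finset (Fin n)) :
    P.p a (s.sup b) = ∑ i ∈ s, P.p a (b i) := by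
  induction s using Finset.induction with
  | empty => simp [P.p_bot_right]
  | @insert i s hi ih =>
      have hor : Orth (b i) (s.sup b) := by
        apply orth_of_le_compl
        apply Finset.sup_le
        intro j hj
        exact horth j i (by rintro rfl; exact hi hj)
      rw [Finset.sup_insert, P.add_right _ _ _ hor, ih, Finset.sum_insert hi]

theorem smap_chain_rule {L : Type*} [OML L] (P : SMap L) (n : ℕ) (b : Fin n → L)
    (horth : ∀ i j, i ≠ j → Orth (b i) (b j))
    (hne : ∀ i, P.p (b i) (b i) ≠ 0)
    (hS : P.p (Finset.univ.sup b) (Finset.univ.sup b) ≠ 0) (a : L) :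
    P.p a (Finset.univ.sup b) / P.p (Finset.univ.sup b) (Finset.univ.sup b) =
      ∑ i : Fin n,
        (P.p (b i) (Finset.univ.sup b) / P.p (Finset.univ.sup b) (Finset.univ.sup b)) *
          (P.p a (b i) / P.p (b i) (b i)) := by
  have hterm : ∀ i : Fin n,
      (P.p (b i) (Finset.univ.sup b) / P.p (Finset.univ.sup b) (Finset.univ.sup b)) *
        (P.p a (b i) / P.p (b i) (b i)) =
      P.p a (b i) / P.p (Finset.univ.sup b) (Finset.univ.sup b) := by
    intro i
    rw [P.p_of_le (Finset.le_sup (Finset.mem_univ i))]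
    field_simp [hne i, hS]
  simp only [hterm]
  rw [← Finset.sum_div, ← P.p_sup_right n b horth]
end

section
/- There exists a finite orthomodular lattice L and an s-map p on L together with elements a, b ∈ L such that p(a,b) = p(a,a)·p(b,b) but p(b,a) ≠ p(a,a)·p(b,b); that is, the independence relation induced by an s-map is not symmetric. Concretely, take L = {0, a, a⊥, b, b⊥, 1} (the horizontal sum MO2, where a,a⊥,b,b⊥ are pairwise incomparable except for the orthocomplement pairs) and p with p(a,a)=0.4, p(b,b)=0.3, p(a,b)=0.12, p(b,a)=0.08, p(a,b⊥)=0.28, p(b,a⊥)=0.22, p(a⊥,b)=0.18, p(b⊥,a)=0.32, p(a⊥,b⊥)=0.42, p(b⊥,a⊥)=0.38, p(a,a⊥)=p(a⊥,a)=p(b,b⊥)=p(b⊥,b)=0, extended additively. -/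
inductive MO2 : Type
  | zero | A | A' | B | B' | one
  deriving DecidableEq

namespace MO2

instance : Fintype MO2 :=
  ⟨{zero, A, A', B, B', one}, fun x => by cases x <;> decide⟩

def le : MO2 → MO2 → Bool
  | zero, _ => true
  | _, one => true
  | A, A => true
  | A', A' => true
  | B, B => true
  | B', B' => true
  | _, _ => false

instance : LE MO2 := ⟨fun x y => le x y = true⟩
instance : LT MO2 := ⟨fun x y => x ≤ y ∧ ¬ y ≤ x⟩

instance : DecidableRel (· ≤ · : MO2 → MO2 → Prop) := fun x y => inferInstanceAs (Decidable (_ = true))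

def sup : MO2 → MO2 → MO2
  | zero, y => y
  | x, zero => x
  | A, A => A
  | A', A' => A'
  | B, B => B
  | B', B' => B'
  | _, _ => one

def inf : MO2 → MO2 → MO2
  | one, y => y
  | x, one => x
  | A, A => A
  | A', A' => A'
  | B, B => B
  | B', B' => B'
  | _, _ => zero

def compl : MO2 → MO2
  | zero => one
  | one => zero
  | A => A'
  | A' => A
  | B => B'
  | B' => B

instance : Lattice MO2 where
  sup := sup
  inf := inf
  le_refl := by decide
  le_trans := by decide
  le_antisymm := by decide
  le_sup_left := by decide
  le_sup_right := by decide
  sup_le := by decide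
  inf_le_left := by decide
  inf_le_right := by decide
  le_inf := by decide

instance : BoundedOrder MO2 where
  top := one
  bot := zero
  le_top := by decide
  bot_le := by decide

instance : Compl MO2 := ⟨compl⟩

@[simp] lemma sup_def (x y : MO2) : x ⊔ y = sup x y := rfl
@[simp] lemma compl_def (x : MO2) : xᶜ = compl x := rfl
@[simp] lemma top_def : (⊤ : MO2) = one := rfl
@[simp] lemma bot_def : (⊥ : MO2) = zero := rfl

instance : OML MO2 where
  compl_compl := by decide
  sup_compl := by decide
  compl_antitone := by decide
  orthomodular := by decide

def pf : MO2 → MO2 → ℝ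
  | zero, _ => 0
  | _, zero => 0
  | A, A => 0.4
  | A, A' => 0
  | A, B => 0.12
  | A, B' => 0.28
  | A, one => 0.4
  | A', A => 0
  | A', A' => 0.6
  | A', B => 0.18
  | A', B' => 0.42
  | A', one => 0.6
  | B, A => 0.08
  | B, A' => 0.22
  | B, B => 0.3
  | B, B' => 0
  | B, one => 0.3
  | B', A => 0.32
  | B', A' => 0.38
  | B', B => 0
  | B', B' => 0.7
  | B', one => 0.7
  | one, A => 0.4
  | one, A' => 0.6
  | one, B => 0.3
  | one, B' => 0.7
  | one, one => 1

def P : SMap MO2 where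
  p := pf
  nonneg := by intro a b; cases a <;> cases b <;> norm_num [pf]
  le_one := by intro a b; cases a <;> cases b <;> norm_num [pf]
  top_top := by norm_num [pf]
  orth_zero := by
    intro a b h
    have h' : a ≤ bᶜ := h
    cases a <;> cases b <;> first
      | exact absurd h' (by decide)
      | norm_num [pf]
  add_left := by
    intro a b c h
    have h' : a ≤ bᶜ := h
    cases a <;> cases b <;> first
      | exact absurd h' (by decide)
      | (cases c <;> norm_num [sup_def, sup, pf])
  add_right := by
    intro a b c h
    have h' : a ≤ bᶜ := h
    cases a <;> cases b <;> first
      | exact absurd h' (by decide)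
      | (cases c <;> norm_num [sup_def, sup, pf])

end MO2

theorem smap_independence_not_symmetric :
    ∃ (L : Type) (inst : OML L) (_ : Fintype L) (P : SMap L) (a b : L),
      Fintype.card L = 6 ∧
      a ≠ ⊥ ∧ b ≠ ⊥ ∧ a ≠ ⊤ ∧ b ≠ ⊤ ∧ a ≠ b ∧ a ≠ bᶜ ∧
      a ⊓ b = ⊥ ∧ a ⊓ bᶜ = ⊥ ∧ aᶜ ⊓ b = ⊥ ∧ aᶜ ⊓ bᶜ = ⊥ ∧
      a ⊔ b = ⊤ ∧ a ⊔ bᶜ = ⊤ ∧ aᶜ ⊔ b = ⊤ ∧ aᶜ ⊔ bᶜ = ⊤ ∧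
      P.p a a = 0.4 ∧ P.p b b = 0.3 ∧ P.p a b = 0.12 ∧ P.p b a = 0.08 ∧
      P.p a bᶜ = 0.28 ∧ P.p b aᶜ = 0.22 ∧ P.p aᶜ b = 0.18 ∧ P.p bᶜ a = 0.32 ∧
      P.p aᶜ bᶜ = 0.42 ∧ P.p bᶜ aᶜ = 0.38 ∧
      P.p a b = P.p a a * P.p b b ∧ P.p b a ≠ P.p a a * P.p b b := by
  refine ⟨MO2, inferInstance, inferInstance, MO2.P, MO2.A, MO2.B, by decide, by decide, by decide,
    by decide, by decide, by decide, by decide, by decide, by decide, by decide, by decide,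
    by decide, by decide, by decide, by decide, ?_, ?_, ?_, ?_, ?_, ?_, ?_, ?_, ?_, ?_, ?_, ?_⟩
    <;> norm_num [MO2.P, MO2.pf, MO2.compl_def, MO2.compl]
end
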